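/- There is no universal extended spiking neural P system without delay that has only 3 neurons, generalised input and standard output (the output neuron firing at most a constant number of times, independent of the input). -/

import Mathlib

open scoped Classical

namespace PaperSNP

/-- A firing rule `E / s^b → s^p` over the unary spike alphabet. -/
structure FireRule where
  E : RegularExpression Unit
  b : ℕ
  p : ℕ

/-- The word consisting of `n` spikes. -/
def spk (n : ℕ) : List Unit := List.replicate n ()

/-- An (extended) spiking neural P system without delay, with `m` neurons.
Neuron `i` initially holds `init i` spikes, has firing rules `fire i` and
forgetting rules `forget i` (a forgetting rule is given by the number `e`
of spikes it removes). -/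
structure SNP (m : ℕ) where
  syn : Finset (Fin m × Fin m)
  inp : Fin m
  out : Fin m
  init : Fin m → ℕ
  fire : Fin m → Set FireRule
  forget : Fin m → Set ℕ

/-- Well-formedness: synapses join distinct neurons, rule sets are finite,
every firing rule `E/s^b → s^p` has `b ≥ p ≥ 1`, and every forgetting rule
`s^e → λ` has `e ≥ 1` with `s^e ∉ L(E)` for each firing rule of the neuron. -/
def SNP.WF {m : ℕ} (P : SNP m) : Prop :=
  (∀ e ∈ P.syn, e.1 ≠ e.2) ∧
  (∀ i, (P.fire i).Finite) ∧ (∀ i, (P.forget i).Finite) ∧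
  (∀ i, ∀ r ∈ P.fire i, 1 ≤ r.p ∧ r.p ≤ r.b) ∧
  (∀ i, ∀ e ∈ P.forget i, 1 ≤ e ∧ ∀ r ∈ P.fire i, spk e ∉ r.E.matches')

/-- A standard system: every firing rule emits exactly one spike. -/
def SNP.Standard {m : ℕ} (P : SNP m) : Prop :=
  ∀ i, ∀ r ∈ P.fire i, r.p = 1

/-- A configuration: spike counts of the neurons and the unread input suffix. -/
structure Config (m : ℕ) where
  sp : Fin m → ℕ
  w : List Bool

/-- An action of a single neuron at a timestep: apply a firing rule,
apply a forgetting rule (removing `e` spikes), or do nothing. -/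
abbrev Act := Option (FireRule ⊕ ℕ)

/-- Applicability of a firing rule in neuron `i` holding `c` spikes. -/
def FireApp {m : ℕ} (P : SNP m) (i : Fin m) (r : FireRule) (c : ℕ) : Prop :=
  r ∈ P.fire i ∧ r.b ≤ c ∧ spk c ∈ r.E.matches'

/-- Applicability of a forgetting rule `s^e → λ` in neuron `i` holding `c` spikes. -/
def ForgetApp {m : ℕ} (P : SNP m) (i : Fin m) (e : ℕ) (c : ℕ) : Prop :=
  e ∈ P.forget i ∧ c = e

/-- An action is valid for neuron `i` holding `c` spikes: a rule may (and must)
be applied exactly when some rule is applicable. -/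
def ActValid {m : ℕ} (P : SNP m) (i : Fin m) (c : ℕ) : Act → Prop
  | none => (∀ r, ¬ FireApp P i r c) ∧ (∀ e, ¬ ForgetApp P i e c)
  | some (Sum.inl r) => FireApp P i r c
  | some (Sum.inr e) => ForgetApp P i e c

/-- Number of spikes consumed by an action. -/
def consumed : Act → ℕ
  | none => 0
  | some (Sum.inl r) => r.b
  | some (Sum.inr e) => e

/-- Number of spikes emitted along each outgoing synapse by an action. -/
def emitted : Act → ℕ
  | some (Sum.inl r) => r.p
  | some (Sum.inr _) => 0
  | none => 0

/-- Spikes received by neuron `i` from the other neurons, given the actions. -/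
def received {m : ℕ} (P : SNP m) (a : Fin m → Act) (i : Fin m) : ℕ :=
  ∑ j : Fin m, if (j, i) ∈ P.syn then emitted (a j) else 0

/-- The spike entering the input neuron from the environment (1 iff the
currently read input symbol is a 1). -/
def inputSpike {m : ℕ} (P : SNP m) (w : List Bool) (i : Fin m) : ℕ :=
  if i = P.inp ∧ w.head? = some true then 1 else 0

/-- One synchronous computation step of the system under actions `a`. -/
def SStep {m : ℕ} (P : SNP m) (a : Fin m → Act) (c c' : Config m) : Prop :=
  (∀ i, ActValid P i (c.sp i) (a i)) ∧
  (∀ i, c'.sp i = c.sp i - consumed (a i) + received P a i + inputSpike P c.w i) ∧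
  c'.w = c.w.tail

/-- Initial configuration on input word `w`. -/
def SNP.initConfig {m : ℕ} (P : SNP m) (w : List Bool) : Config m := ⟨P.init, w⟩

/-- A computation (run) of the system on input word `w`. -/
structure Run {m : ℕ} (P : SNP m) (w : List Bool) where
  cfg : ℕ → Config m
  act : ℕ → Fin m → Act
  init_eq : cfg 0 = P.initConfig w
  step : ∀ t, SStep P (act t) (cfg t) (cfg (t + 1))

/-- The output neuron fires at timestep `t` of the run. -/
def FiresAt {m : ℕ} {P : SNP m} {w : List Bool} (ρ : Run P w) (t : ℕ) : Prop :=
  ∃ r : FireRule, ρ.act t P.out = some (Sum.inl r)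

/-- Exactly `x` spikes are sent out of the output neuron at timestep `t`. -/
def SendsAt {m : ℕ} {P : SNP m} {w : List Bool} (ρ : Run P w) (t x : ℕ) : Prop :=
  ∃ r : FireRule, ρ.act t P.out = some (Sum.inl r) ∧ r.p = x

/-- `t1 < t2` are the first two timesteps at which the event `F` happens and
`z = t2 - t1` (the output value). -/
def OutputIs (F : ℕ → Prop) (z : ℕ) : Prop :=
  ∃ t1 t2, t1 < t2 ∧ F t1 ∧ F t2 ∧ (∀ s, s < t2 → s ≠ t1 → ¬ F s) ∧ z = t2 - t1

/-- As `OutputIs`, with moreover the second event occurring by timestep `T`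
(the whole computation takes at most `T` timesteps). -/
def OutWithin (F : ℕ → Prop) (z T : ℕ) : Prop :=
  ∃ t1 t2, t1 < t2 ∧ F t1 ∧ F t2 ∧ (∀ s, s < t2 → s ≠ t1 → ¬ F s) ∧ z = t2 - t1 ∧ t2 ≤ T

/-- The system outputs `z` on input `w` (standard output convention: `z` is the
number of timesteps between the first and second firings of the output neuron). -/
def Outputs {m : ℕ} (P : SNP m) (w : List Bool) (z : ℕ) : Prop :=
  ∃ ρ : Run P w, OutputIs (FiresAt ρ) z

/-- Generalised output with constant `x`: `z` is the number of timesteps between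
the first and second timesteps at which exactly `x` spikes leave the output neuron. -/
def GenOutputs {m : ℕ} (P : SNP m) (x : ℕ) (w : List Bool) (z : ℕ) : Prop :=
  ∃ ρ : Run P w, OutputIs (fun t => SendsAt ρ t x) z

/-- `phi x v`: the `x`-th partial recursive function of a fixed Gödel enumeration,
applied to the (encoded) tuple `v` of natural numbers. -/
def phi (x : ℕ) (v : List ℕ) : Part ℕ :=
  Nat.Partrec.Code.eval (Denumerable.ofNat Nat.Partrec.Code x) (Encodable.encode v)

/-- Universality of a system `P` with respect to an output convention `Out`:
there are recursive (computable) functions `f` and `g` such that for all `x` and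
all argument tuples `v`, `phi x v = f (P(g(x, v)))`, the two sides being defined
together. -/
def UniversalVia {m : ℕ} (P : SNP m) (Out : List Bool → ℕ → Prop) : Prop :=
  ∃ (f : ℕ → ℕ) (g : ℕ × List ℕ → List Bool),
    Computable f ∧ Computable g ∧
    ∀ (x : ℕ) (v : List ℕ),
      (∀ z, Out (g (x, v)) z → phi x v = Part.some (f z)) ∧
      ((phi x v).Dom → ∃ z, Out (g (x, v)) z)

/-- Universality with the standard output convention. -/
def Universal {m : ℕ} (P : SNP m) : Prop := UniversalVia P (Outputs P)
/-! ### Module A : eventually periodic subsets of ℕ -/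

/-- `S` is eventually periodic with threshold `N` and period `p`. -/
def EvPer (S : Set ℕ) (N p : ℕ) : Prop := 0 < p ∧ ∀ n, N ≤ n → (n + p ∈ S ↔ n ∈ S)

def EP (S : Set ℕ) : Prop := ∃ N p, EvPer S N p

lemma EvPer.add_mul {S : Set ℕ} {N p : ℕ} (h : EvPer S N p) :
    ∀ (k n : ℕ), N ≤ n → (n + k * p ∈ S ↔ n ∈ S) := by
  intro k
  induction k with
  | zero => simp
  | succ k ih =>
    intro n hn
    have h1 : n + (k + 1) * p = (n + k * p) + p := by ring
    rw [h1, h.2 _ (le_trans hn (Nat.le_add_right _ _)), ih n hn]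

lemma EvPer.congr {S : Set ℕ} {N p : ℕ} (h : EvPer S N p) {m n : ℕ}
    (hm : N ≤ m) (hn : N ≤ n) (hmn : m % p = n % p) : m ∈ S ↔ n ∈ S := by
  rcases le_total m n with hle | hle
  · obtain ⟨k, hk⟩ : p ∣ n - m := (Nat.modEq_iff_dvd' hle).1 hmn
    have hc : p * k = k * p := mul_comm _ _
    have : n = m + k * p := by omega
    rw [this, h.add_mul k m hm]
  · obtain ⟨k, hk⟩ : p ∣ m - n := (Nat.modEq_iff_dvd' hle).1 hmn.symm
    have hc : p * k = k * p := mul_comm _ _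
    have : m = n + k * p := by omega
    rw [this, h.add_mul k n hn]

/-- enlarge threshold and multiply period -/
lemma EvPer.mono {S : Set ℕ} {N p N' p' : ℕ} (h : EvPer S N p) (hN : N ≤ N')
    (hp : p ∣ p') (hp' : 0 < p') : EvPer S N' p' := by
  obtain ⟨k, rfl⟩ := hp
  refine ⟨hp', fun n hn => ?_⟩
  have := h.add_mul k n (le_trans hN hn)
  rwa [show n + p * k = n + k * p by ring]

lemma EP.bddAbove {S : Set ℕ} {k : ℕ} (h : ∀ n ∈ S, n ≤ k) : EP S := by
  refine ⟨k + 1, 1, one_pos, fun n hn => ?_⟩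
  constructor
  · intro hmem; exact absurd (h _ hmem) (by omega)
  · intro hmem; exact absurd (h _ hmem) (by omega)

lemma EP.union {S T : Set ℕ} (hS : EP S) (hT : EP T) : EP (S ∪ T) := by
  obtain ⟨N1, p1, h1⟩ := hS
  obtain ⟨N2, p2, h2⟩ := hT
  have hp : 0 < p1 * p2 := Nat.mul_pos h1.1 h2.1
  refine ⟨max N1 N2, p1 * p2, hp, fun n hn => ?_⟩
  have e1 := (h1.mono (le_refl N1) ⟨p2, rfl⟩ hp).2 n (le_trans (le_max_left _ _) hn)
  have e2 := (h2.mono (le_refl N2) ⟨p1, mul_comm _ _⟩ hp).2 n (le_trans (le_max_right _ _) hn)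
  simp only [Set.mem_union]
  tauto

/-- Minkowski sums of eventually periodic sets are eventually periodic. -/
lemma EP.addSet {S T : Set ℕ} (hS : EP S) (hT : EP T) :
    EP {n | ∃ a b, a ∈ S ∧ b ∈ T ∧ a + b = n} := by
  obtain ⟨N1, p1, h1⟩ := hS
  obtain ⟨N2, p2, h2⟩ := hT
  have hp : 0 < p1 * p2 := Nat.mul_pos h1.1 h2.1
  set p := p1 * p2 with hpdef
  have h1' : EvPer S N1 p := h1.mono (le_refl _) ⟨p2, rfl⟩ hp
  have h2' : EvPer T N2 p := h2.mono (le_refl _) ⟨p1, mul_comm _ _⟩ hp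
  refine ⟨N1 + N2 + p, p, hp, fun n hn => ?_⟩
  constructor
  · rintro ⟨a, b, ha, hb, hab⟩
    by_cases hcase : N1 + p ≤ a
    · refine ⟨a - p, b, ?_, hb, by omega⟩
      have h := (h1'.2 (a - p) (by omega))
      rw [show a - p + p = a by omega] at h
      exact h.1 ha
    · refine ⟨a, b - p, ha, ?_, by omega⟩
      have hbge : N2 + p ≤ b := by omega
      have h := (h2'.2 (b - p) (by omega))
      rw [show b - p + p = b by omega] at h
      exact h.1 hb
  · rintro ⟨a, b, ha, hb, hab⟩
    by_cases hcase : N1 ≤ a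
    · exact ⟨a + p, b, (h1'.2 a hcase).2 ha, hb, by omega⟩
    · have hbge : N2 ≤ b := by omega
      exact ⟨a, b + p, ha, (h2'.2 b hbge).2 hb, by omega⟩

/-- Any subset of ℕ containing 0 and closed under addition is eventually periodic. -/
lemma EP.of_addClosed {S : Set ℕ} (h0 : (0 : ℕ) ∈ S)
    (hadd : ∀ a b, a ∈ S → b ∈ S → a + b ∈ S) : EP S := by
  by_cases hs : ∃ s ∈ S, 0 < s
  · obtain ⟨s, hsS, hspos⟩ := hs
    -- minimal element of each residue class
    set m : ℕ → ℕ := fun r => sInf {n | n ∈ S ∧ n % s = r} with hm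
    set N : ℕ := (Finset.range s).sup m + 1 with hN
    refine ⟨N, s, hspos, fun n hn => ?_⟩
    have upward : ∀ x, x ∈ S → x + s ∈ S := fun x hx => hadd x s hx hsS
    constructor
    · intro hns
      -- n + s ∈ S, s ≥ N : the residue class of n is nonempty
      have hne : (n + s) ∈ {x | x ∈ S ∧ x % s = n % s} := ⟨hns, Nat.add_mod_right n s⟩
      have hmle : m (n % s) ≤ n + s := Nat.sInf_le hne
      have hmmem : m (n % s) ∈ {x | x ∈ S ∧ x % s = n % s} :=
        Nat.sInf_mem ⟨n + s, hne⟩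
      -- n ≥ N > m (n % s), same residue, so n = m + k * s
      have hlt : m (n % s) < N := by
        have : m (n % s) ≤ (Finset.range s).sup m :=
          Finset.le_sup (Finset.mem_range.2 (Nat.mod_lt _ hspos))
        omega
      have hle : m (n % s) ≤ n := by omega
      obtain ⟨k, hk⟩ : s ∣ n - m (n % s) := by
        have hres : m (n % s) % s = n % s := hmmem.2
        exact (Nat.modEq_iff_dvd' hle).1 hres
      have hc : s * k = k * s := mul_comm _ _
      have hkn : n = m (n % s) + k * s := by omega
      clear_value m
      rw [hkn]
      clear hc hkn hk hn hne hmle hlt hle hns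
      induction k with
      | zero =>
        have hz : m (n % s) + 0 * s = m (n % s) := by ring
        rw [hz]; exact hmmem.1
      | succ k ih =>
        have : m (n % s) + (k + 1) * s = (m (n % s) + k * s) + s := by ring
        rw [this]
        exact upward _ ih
    · intro hnS
      exact upward n hnS
  · push_neg at hs
    exact EP.bddAbove (k := 0) (fun n hn => by have := hs n hn; omega)

/-! ### unary regular languages -/

lemma spk_length (l : List Unit) : l = spk l.length := by
  induction l with
  | nil => rfl
  | cons a l ih =>
    show a :: l = List.replicate (l.length + 1) ()
    rw [List.replicate_succ]
    exact congrArg₂ List.cons rfl ih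

lemma spk_append (a b : ℕ) : spk a ++ spk b = spk (a + b) :=
  (List.replicate_add a b ()).symm

lemma spk_inj {a b : ℕ} (h : spk a = spk b) : a = b := by
  have := congrArg List.length h
  simpa [spk] using this

/-- The set of spike counts matched by a unary regular expression is eventually periodic. -/
lemma regex_EP (E : RegularExpression Unit) : EP {n | spk n ∈ E.matches'} := by
  induction E with
  | zero =>
    refine EP.bddAbove (k := 0) (fun n hn => ?_)
    have hz : RegularExpression.zero.matches' = (0 : Language Unit) := rfl
    rw [Set.mem_setOf_eq, hz] at hn
    exact absurd hn (Language.notMem_zero _)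
  | epsilon =>
    refine EP.bddAbove (k := 0) (fun n hn => ?_)
    have he : RegularExpression.epsilon.matches' = (1 : Language Unit) := rfl
    rw [Set.mem_setOf_eq, he, Language.mem_one] at hn
    have : n = 0 := by
      have := congrArg List.length hn; simpa [spk] using this
    omega
  | char a =>
    refine EP.bddAbove (k := 1) (fun n hn => ?_)
    rw [Set.mem_setOf_eq, RegularExpression.matches'_char] at hn
    have : spk n = [a] := hn
    have := congrArg List.length this
    simp [spk] at this
    omega
  | plus P Q hP hQ =>
    have : {n | spk n ∈ (P.plus Q).matches'} =
        {n | spk n ∈ P.matches'} ∪ {n | spk n ∈ Q.matches'} := by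
      ext n
      simp only [Set.mem_setOf_eq, Set.mem_union]
      rw [show P.plus Q = P + Q from rfl, RegularExpression.matches'_add]
      rfl
    rw [this]; exact hP.union hQ
  | comp P Q hP hQ =>
    have : {n | spk n ∈ (P.comp Q).matches'} =
        {n | ∃ a b, a ∈ {m | spk m ∈ P.matches'} ∧ b ∈ {m | spk m ∈ Q.matches'} ∧ a + b = n} := by
      ext n
      simp only [Set.mem_setOf_eq]
      rw [show P.comp Q = P * Q from rfl, RegularExpression.matches'_mul]
      constructor
      · intro h
        obtain ⟨a, ha, b, hb, hab⟩ := Language.mem_mul.1 h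
        refine ⟨a.length, b.length, ?_, ?_, ?_⟩
        · rwa [← spk_length]
        · rwa [← spk_length]
        · have := congrArg List.length hab
          simpa [spk] using this
      · rintro ⟨a, b, ha, hb, rfl⟩
        exact Language.mem_mul.2 ⟨spk a, ha, spk b, hb, spk_append a b⟩
    rw [this]; exact hP.addSet hQ
  | star P hP =>
    refine EP.of_addClosed ?_ ?_
    · show spk 0 ∈ P.star.matches'
      rw [RegularExpression.matches'_star]
      exact Language.nil_mem_kstar _
    · intro a b ha hb
      show spk (a + b) ∈ P.star.matches'
      rw [RegularExpression.matches'_star]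
      rw [Set.mem_setOf_eq, RegularExpression.matches'_star] at ha hb
      rw [← spk_append]
      obtain ⟨L1, hL1, hmem1⟩ := Language.mem_kstar.1 ha
      obtain ⟨L2, hL2, hmem2⟩ := Language.mem_kstar.1 hb
      refine Language.mem_kstar.2 ⟨L1 ++ L2, ?_, ?_⟩
      · simp [hL1, hL2]
      · intro y hy
        rcases List.mem_append.1 hy with h | h
        exacts [hmem1 y h, hmem2 y h]



/-! ### Module B : run basics and the bound on non-output neurons -/

section RunBasics

variable {m : ℕ} {P : SNP m} {w : List Bool}

lemma Run.w_eq (ρ : Run P w) : ∀ t, (ρ.cfg t).w = w.drop t := by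
  intro t
  induction t with
  | zero => rw [ρ.init_eq]; rfl
  | succ t ih => rw [(ρ.step t).2.2, ih, List.tail_drop]

lemma Run.valid (ρ : Run P w) (t : ℕ) (i : Fin m) :
    ActValid P i ((ρ.cfg t).sp i) (ρ.act t i) := (ρ.step t).1 i

lemma Run.sp_succ (ρ : Run P w) (t : ℕ) (i : Fin m) :
    (ρ.cfg (t + 1)).sp i =
      (ρ.cfg t).sp i - consumed (ρ.act t i) + received P (ρ.act t) i
        + inputSpike P ((ρ.cfg t).w) i := (ρ.step t).2.1 i

lemma consumed_le_of_valid {i : Fin m} {c : ℕ} {a : Act} (h : ActValid P i c a) :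
    consumed a ≤ c := by
  match a with
  | none => exact Nat.zero_le c
  | some (Sum.inl r) => exact h.2.1
  | some (Sum.inr e) => exact le_of_eq h.2.symm

lemma emitted_le_of_valid (hWF : P.WF) {i : Fin m} {c : ℕ} {a : Act}
    (h : ActValid P i c a) : emitted a ≤ consumed a := by
  match a with
  | none => exact le_refl 0
  | some (Sum.inl r) => exact (hWF.2.2.2.1 i r h.1).2
  | some (Sum.inr e) => exact Nat.zero_le _

lemma emitted_out_bound {pO : ℕ} (hpO : ∀ r ∈ P.fire P.out, r.p ≤ pO)
    (ρ : Run P w) (t : ℕ) :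
    emitted (ρ.act t P.out) ≤ pO * (if FiresAt ρ t then 1 else 0) := by
  rcases ha : ρ.act t P.out with _ | rr
  · simp [emitted]
  · rcases rr with r | e
    · have hf : FiresAt ρ t := ⟨r, ha⟩
      have hv := ρ.valid t P.out
      rw [ha] at hv
      simp only [emitted, if_pos hf, mul_one]
      exact hpO r hv.1
    · simp [emitted]

/-- the number of firings of the output neuron among timesteps in `[0, t)`. -/
noncomputable def fct (ρ : Run P w) (t : ℕ) : ℕ :=
  ((Finset.range t).filter (fun τ => FiresAt ρ τ)).card

lemma fct_succ (ρ : Run P w) (t : ℕ) :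
    fct ρ (t + 1) = fct ρ t + (if FiresAt ρ t then 1 else 0) := by
  unfold fct
  rw [Finset.range_add_one, Finset.filter_insert]
  split
  · rw [Finset.card_insert_of_notMem (by simp)]
  · simp

lemma fct_le (ρ : Run P w) {y : ℕ}
    (hy : ∀ S : Finset ℕ, (∀ τ ∈ S, FiresAt ρ τ) → S.card ≤ y) (t : ℕ) :
    fct ρ t ≤ y := by
  refine hy _ (fun τ hτ => ?_)
  exact (Finset.mem_filter.1 hτ).2

end RunBasics

section PairBound

variable {P : SNP 3} {w : List Bool}

/-- sum of spikes in the two neurons other than the output neuron -/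
noncomputable def pairSum (ρ : Run P w) (t : ℕ) : ℕ :=
  ∑ i ∈ Finset.univ.erase P.out, (ρ.cfg t).sp i

lemma pair_card : (Finset.univ.erase P.out).card = 2 := by
  rw [Finset.card_erase_of_mem (Finset.mem_univ _)]
  simp

lemma recv_pair_bound (hWF : P.WF) (a : Fin 3 → Act) :
    ∑ i ∈ Finset.univ.erase P.out, received P a i ≤
      (∑ j ∈ Finset.univ.erase P.out, emitted (a j)) + 2 * emitted (a P.out) := by
  unfold received
  rw [Finset.sum_comm]
  have hterm : ∀ j : Fin 3,
      (∑ i ∈ Finset.univ.erase P.out, if (j, i) ∈ P.syn then emitted (a j) else 0)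
        = emitted (a j) * ((Finset.univ.erase P.out).filter (fun i => (j, i) ∈ P.syn)).card := by
    intro j
    rw [← Finset.sum_filter, Finset.sum_const, smul_eq_mul, mul_comm]
  calc ∑ j : Fin 3, (∑ i ∈ Finset.univ.erase P.out, if (j, i) ∈ P.syn then emitted (a j) else 0)
      = ∑ j : Fin 3, emitted (a j) *
          ((Finset.univ.erase P.out).filter (fun i => (j, i) ∈ P.syn)).card := by
        exact Finset.sum_congr rfl (fun j _ => hterm j)
    _ ≤ (∑ j ∈ Finset.univ.erase P.out, emitted (a j)) + 2 * emitted (a P.out) := by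
        rw [← Finset.sum_erase_add _ _ (Finset.mem_univ P.out)]
        refine Nat.add_le_add ?_ ?_
        · refine Finset.sum_le_sum (fun j hj => ?_)
          have hsub : (Finset.univ.erase P.out).filter (fun i => (j, i) ∈ P.syn) ⊆
              (Finset.univ.erase P.out).erase j := by
            intro i hi
            rw [Finset.mem_filter] at hi
            refine Finset.mem_erase.2 ⟨?_, hi.1⟩
            intro hij
            exact (hWF.1 (j, i) hi.2) (by rw [hij])
          have hone : ((Finset.univ.erase P.out).erase j).card = 1 := by
            rw [Finset.card_erase_of_mem hj, pair_card]
          have hcard : ((Finset.univ.erase P.out).filter (fun i => (j, i) ∈ P.syn)).card ≤ 1 :=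
            hone ▸ Finset.card_le_card hsub
          calc emitted (a j) * _ ≤ emitted (a j) * 1 := Nat.mul_le_mul_left _ hcard
            _ = emitted (a j) := Nat.mul_one _
        · have hcard : ((Finset.univ.erase P.out).filter (fun i => (P.out, i) ∈ P.syn)).card ≤ 2 := by
            calc _ ≤ (Finset.univ.erase P.out).card :=
                  Finset.card_le_card (Finset.filter_subset _ _)
              _ = 2 := pair_card
          calc emitted (a P.out) * _ ≤ emitted (a P.out) * 2 := Nat.mul_le_mul_left _ hcard
            _ = 2 * emitted (a P.out) := Nat.mul_comm _ _

end PairBound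

section PairBound2

variable {P : SNP 3} {w : List Bool}

lemma pairSum_succ_le (hWF : P.WF) {pO : ℕ} (hpO : ∀ r ∈ P.fire P.out, r.p ≤ pO)
    (ρ : Run P w) (t : ℕ) :
    pairSum ρ (t + 1) ≤ pairSum ρ t + (if t < w.length then 1 else 0)
      + 2 * (pO * (if FiresAt ρ t then 1 else 0)) := by
  classical
  set pr := Finset.univ.erase P.out with hpr
  have hsplit : pairSum ρ (t + 1) =
      (∑ i ∈ pr, ((ρ.cfg t).sp i - consumed (ρ.act t i)))
      + (∑ i ∈ pr, received P (ρ.act t) i)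
      + (∑ i ∈ pr, inputSpike P ((ρ.cfg t).w) i) := by
    unfold pairSum
    rw [← Finset.sum_add_distrib, ← Finset.sum_add_distrib]
    exact Finset.sum_congr rfl (fun i _ => ρ.sp_succ t i)
  have hA : (∑ i ∈ pr, ((ρ.cfg t).sp i - consumed (ρ.act t i)))
      + (∑ i ∈ pr, consumed (ρ.act t i)) = pairSum ρ t := by
    unfold pairSum
    rw [← Finset.sum_add_distrib]
    refine Finset.sum_congr rfl (fun i _ => ?_)
    have := consumed_le_of_valid (ρ.valid t i)
    omega
  have hB : (∑ i ∈ pr, received P (ρ.act t) i) ≤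
      (∑ j ∈ pr, consumed (ρ.act t j)) + 2 * (pO * (if FiresAt ρ t then 1 else 0)) := by
    calc (∑ i ∈ pr, received P (ρ.act t) i)
        ≤ (∑ j ∈ pr, emitted (ρ.act t j)) + 2 * emitted (ρ.act t P.out) :=
          recv_pair_bound hWF (ρ.act t)
      _ ≤ (∑ j ∈ pr, consumed (ρ.act t j)) + 2 * (pO * (if FiresAt ρ t then 1 else 0)) := by
          refine Nat.add_le_add ?_ ?_
          · exact Finset.sum_le_sum (fun j _ => emitted_le_of_valid hWF (ρ.valid t j))
          · exact Nat.mul_le_mul_left 2 (emitted_out_bound hpO ρ t)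
  have hC : (∑ i ∈ pr, inputSpike P ((ρ.cfg t).w) i) ≤ (if t < w.length then 1 else 0) := by
    by_cases hlen : t < w.length
    · rw [if_pos hlen]
      calc (∑ i ∈ pr, inputSpike P ((ρ.cfg t).w) i)
          ≤ (∑ i ∈ pr, if i = P.inp then 1 else 0) := by
            refine Finset.sum_le_sum (fun i _ => ?_)
            unfold inputSpike
            split
            · rename_i h; rw [if_pos h.1]
            · exact Nat.zero_le _
        _ ≤ 1 := by
            rw [Finset.sum_ite_eq' pr P.inp (fun _ => 1)]
            split <;> omega
    · rw [if_neg hlen]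
      have hw : (ρ.cfg t).w = [] := by
        rw [ρ.w_eq t]
        exact List.drop_eq_nil_of_le (by omega)
      have : ∀ i ∈ pr, inputSpike P ((ρ.cfg t).w) i = 0 := by
        intro i _
        unfold inputSpike
        rw [hw]
        simp
      rw [Finset.sum_congr rfl this]
      simp
  omega

lemma pairSum_bound (hWF : P.WF) {pO : ℕ} (hpO : ∀ r ∈ P.fire P.out, r.p ≤ pO)
    (ρ : Run P w) (t : ℕ) :
    pairSum ρ t ≤ pairSum ρ 0 + min t w.length + 2 * (pO * fct ρ t) := by
  induction t with
  | zero => simp [fct]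
  | succ t ih =>
    have h1 := pairSum_succ_le hWF hpO ρ t
    have h2 := fct_succ ρ t
    have h3 : min t w.length + (if t < w.length then 1 else 0) ≤ min (t + 1) w.length := by
      split <;> omega
    have hpo : pO * fct ρ (t + 1) = pO * fct ρ t + pO * (if FiresAt ρ t then 1 else 0) := by
      rw [h2]; ring
    omega

/-- The bound on the spike count of the non-output neurons. -/
lemma sp_le_bound (hWF : P.WF) {pO y : ℕ} (hpO : ∀ r ∈ P.fire P.out, r.p ≤ pO)
    (ρ : Run P w)
    (hy : ∀ S : Finset ℕ, (∀ τ ∈ S, FiresAt ρ τ) → S.card ≤ y)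
    (t : ℕ) {i : Fin 3} (hi : i ≠ P.out) :
    (ρ.cfg t).sp i ≤ (∑ j, P.init j) + w.length + 2 * (pO * y) := by
  have h1 : (ρ.cfg t).sp i ≤ pairSum ρ t := by
    refine Finset.single_le_sum (fun j _ => Nat.zero_le _) ?_
    exact Finset.mem_erase.2 ⟨hi, Finset.mem_univ _⟩
  have h2 := pairSum_bound hWF hpO ρ t
  have h3 : pairSum ρ 0 ≤ ∑ j, P.init j := by
    unfold pairSum
    rw [ρ.init_eq]
    exact Finset.sum_le_sum_of_subset (Finset.subset_univ _)
  have h4 : fct ρ t ≤ y := fct_le ρ hy t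
  have := min_le_right t w.length
  have h5 : pO * fct ρ t ≤ pO * y := Nat.mul_le_mul_left _ h4
  omega

end PairBound2

/-! ### Module C1 : transfer and persistence lemmas for the output neuron -/

section Transfer

variable {P : SNP 3} {w : List Bool} {y pO bO eO N0 Pi : ℕ}

lemma fireApp_transfer
    (hbO : ∀ r ∈ P.fire P.out, r.b ≤ bO)
    (hper : ∀ r ∈ P.fire P.out, ∀ c1 c2, N0 ≤ c1 → N0 ≤ c2 → c1 % Pi = c2 % Pi →
      (spk c1 ∈ r.E.matches' ↔ spk c2 ∈ r.E.matches'))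
    {r : FireRule} {c1 c2 : ℕ}
    (h1 : N0 + bO < c1) (h2 : N0 + bO < c2) (hmod : c1 % Pi = c2 % Pi) :
    FireApp P P.out r c1 ↔ FireApp P P.out r c2 := by
  unfold FireApp
  constructor
  · rintro ⟨hr, _, hE⟩
    exact ⟨hr, le_trans (le_trans (hbO r hr) (by omega)) (le_refl c2),
      (hper r hr c1 c2 (by omega) (by omega) hmod).1 hE⟩
  · rintro ⟨hr, _, hE⟩
    exact ⟨hr, le_trans (hbO r hr) (by omega),
      (hper r hr c1 c2 (by omega) (by omega) hmod).2 hE⟩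

lemma actValid_out_transfer
    (hbO : ∀ r ∈ P.fire P.out, r.b ≤ bO)
    (heO : ∀ e ∈ P.forget P.out, e ≤ eO)
    (hper : ∀ r ∈ P.fire P.out, ∀ c1 c2, N0 ≤ c1 → N0 ≤ c2 → c1 % Pi = c2 % Pi →
      (spk c1 ∈ r.E.matches' ↔ spk c2 ∈ r.E.matches'))
    {c1 c2 : ℕ} {a : Act} (hv : ActValid P P.out c1 a)
    (h1 : N0 + bO + eO < c1) (h2 : N0 + bO + eO < c2) (hmod : c1 % Pi = c2 % Pi) :
    ActValid P P.out c2 a := by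
  match a with
  | none =>
    refine ⟨fun r hF => ?_, fun e hFo => ?_⟩
    · by_cases hr : r ∈ P.fire P.out
      · exact hv.1 r ((fireApp_transfer hbO hper (by omega) (by omega) hmod).2 hF)
      · exact hr hF.1
    · exact absurd (heO e hFo.1) (by have := hFo.2; omega)
  | some (Sum.inl r) =>
    exact (fireApp_transfer hbO hper (by omega) (by omega) hmod).1 hv
  | some (Sum.inr e) =>
    exact absurd (heO e hv.1) (by have := hv.2; omega)

/-- firing count on an interval -/
noncomputable def fctI (ρ : Run P w) (s t : ℕ) : ℕ :=
  ((Finset.Ico s t).filter (fun τ => FiresAt ρ τ)).card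

lemma fctI_succ (ρ : Run P w) {s t : ℕ} (hst : s ≤ t) :
    fctI ρ s (t + 1) = fctI ρ s t + (if FiresAt ρ t then 1 else 0) := by
  unfold fctI
  rw [Nat.Ico_succ_right_eq_insert_Ico hst, Finset.filter_insert]
  split
  · rw [Finset.card_insert_of_notMem (by simp)]
  · simp

lemma fctI_le (ρ : Run P w) {s t : ℕ}
    (hy : ∀ S : Finset ℕ, (∀ τ ∈ S, FiresAt ρ τ) → S.card ≤ y) :
    fctI ρ s t ≤ y :=
  hy _ (fun τ hτ => (Finset.mem_filter.1 hτ).2)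

/-- Once the output neuron's spike count is very large, it never again applies a
forgetting rule, and its count keeps a large floor. -/
lemma out_persist
    (hbO : ∀ r ∈ P.fire P.out, r.b ≤ bO)
    (heO : ∀ e ∈ P.forget P.out, e ≤ eO)
    (ρ : Run P w)
    (hy : ∀ S : Finset ℕ, (∀ τ ∈ S, FiresAt ρ τ) → S.card ≤ y)
    {s : ℕ} (hs : N0 + bO + eO + bO * y < (ρ.cfg s).sp P.out) :
    ∀ t, s ≤ t → (ρ.cfg s).sp P.out ≤ (ρ.cfg t).sp P.out + bO * fctI ρ s t := by
  intro t hst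
  induction t, hst using Nat.le_induction with
  | base =>
    have : fctI ρ s s = 0 := by unfold fctI; simp
    omega
  | succ t hst ih =>
    have ih := ih
    have hv := ρ.valid t P.out
    have hsp := ρ.sp_succ t P.out
    have hfs := fctI_succ ρ hst
    have hfley : fctI ρ s t ≤ y := fctI_le ρ hy
    have hmul : bO * fctI ρ s t ≤ bO * y := Nat.mul_le_mul_left _ hfley
    rcases ha : ρ.act t P.out with _ | rr
    · rw [ha] at hsp
      have hcons : consumed (none : Act) = 0 := rfl
      have hnf : ¬ FiresAt ρ t := by
        rintro ⟨r, hr⟩; rw [ha] at hr; cases hr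
      rw [if_neg hnf] at hfs
      have hlin : bO * fctI ρ s (t + 1) = bO * fctI ρ s t := by rw [hfs]; ring
      omega
    · rcases rr with r | e
      · rw [ha] at hv hsp
        have hb : consumed (some (Sum.inl r) : Act) = r.b := rfl
        have hrb : r.b ≤ bO := hbO r hv.1
        have hf : FiresAt ρ t := ⟨r, ha⟩
        rw [if_pos hf] at hfs
        have hlin : bO * fctI ρ s (t + 1) = bO * fctI ρ s t + bO := by rw [hfs]; ring
        omega
      · rw [ha] at hv
        have he : (ρ.cfg t).sp P.out = e := hv.2
        have heO' : e ≤ eO := heO e hv.1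
        omega

/-- While the output neuron does not fire and holds more than `eO` spikes,
its spike count is non-decreasing. -/
lemma out_mono_of_no_fire
    (heO : ∀ e ∈ P.forget P.out, e ≤ eO)
    (ρ : Run P w) {s1 : ℕ} (hbig : eO < (ρ.cfg s1).sp P.out) :
    ∀ s2, s1 ≤ s2 → (∀ τ, s1 ≤ τ → τ < s2 → ¬ FiresAt ρ τ) →
      (ρ.cfg s1).sp P.out ≤ (ρ.cfg s2).sp P.out := by
  intro s2 hs2
  induction s2, hs2 using Nat.le_induction with
  | base => exact fun _ => le_refl _
  | succ t hst ih =>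
    intro hnf
    have ih' := ih (fun τ h1 h2 => hnf τ h1 (by omega))
    have hv := ρ.valid t P.out
    have hsp := ρ.sp_succ t P.out
    rcases ha : ρ.act t P.out with _ | rr
    · rw [ha] at hsp
      have hcons : consumed (none : Act) = 0 := rfl
      omega
    · rcases rr with r | e
      · exact absurd ⟨r, ha⟩ (hnf t hst (by omega))
      · rw [ha] at hv
        have he : (ρ.cfg t).sp P.out = e := hv.2
        have heO' : e ≤ eO := heO e hv.1
        omega

end Transfer

/-! ### Module C2 : the splice lemma -/

section Splice

variable {P : SNP 3} {w : List Bool} {y bO eO N0 Pi : ℕ}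

/-- helper: configuration with `δ` spikes removed from the output neuron -/
noncomputable def shConf (P : SNP 3) (δ : ℕ) (c : Config 3) : Config 3 :=
  ⟨fun i => if i = P.out then c.sp i - δ else c.sp i, c.w⟩

@[simp] lemma shConf_w (δ : ℕ) (c : Config 3) : (shConf P δ c).w = c.w := rfl

lemma shConf_sp_out (δ : ℕ) (c : Config 3) : (shConf P δ c).sp P.out = c.sp P.out - δ := by
  simp [shConf]

lemma shConf_sp_ne (δ : ℕ) (c : Config 3) {i : Fin 3} (hi : i ≠ P.out) :
    (shConf P δ c).sp i = c.sp i := by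
  simp [shConf, hi]

lemma Config.ext' {m : ℕ} {c d : Config m} (h1 : c.sp = d.sp) (h2 : c.w = d.w) : c = d := by
  cases c; cases d; cases h1; cases h2; rfl

lemma splice
    (hbO : ∀ r ∈ P.fire P.out, r.b ≤ bO)
    (heO : ∀ e ∈ P.forget P.out, e ≤ eO)
    (hper : ∀ r ∈ P.fire P.out, ∀ c1 c2, N0 ≤ c1 → N0 ≤ c2 → c1 % Pi = c2 % Pi →
      (spk c1 ∈ r.E.matches' ↔ spk c2 ∈ r.E.matches'))
    (ρ : Run P w)
    (hy : ∀ S : Finset ℕ, (∀ τ ∈ S, FiresAt ρ τ) → S.card ≤ y)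
    {s1 s2 : ℕ} (hw1 : w.length ≤ s1) (h01 : 1 ≤ s1) (h12 : s1 < s2)
    (hpair : ∀ i, i ≠ P.out → (ρ.cfg s1).sp i = (ρ.cfg s2).sp i)
    (hole : (ρ.cfg s1).sp P.out ≤ (ρ.cfg s2).sp P.out)
    (hmod : (ρ.cfg s1).sp P.out % Pi = (ρ.cfg s2).sp P.out % Pi)
    (hbig : (ρ.cfg s1).sp P.out = (ρ.cfg s2).sp P.out ∨
            N0 + bO + eO + bO * y < (ρ.cfg s1).sp P.out) :
    ∃ ρ' : Run P w,
      ∀ t, ρ'.act t = if t < s1 then ρ.act t else ρ.act (t + (s2 - s1)) := by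
  classical
  set Δ := s2 - s1 with hΔdef
  set δ := (ρ.cfg s2).sp P.out - (ρ.cfg s1).sp P.out with hδdef
  have hdvd : Pi ∣ δ := (Nat.modEq_iff_dvd' hole).1 hmod
  -- floor for all times u ≥ s2
  have hfloor : ∀ u, s2 ≤ u → δ = 0 ∨ (N0 + bO + eO + δ < (ρ.cfg u).sp P.out) := by
    intro u hu
    rcases hbig with h | h
    · left; omega
    · right
      have hb2 : N0 + bO + eO + bO * y < (ρ.cfg s2).sp P.out := by omega
      have hp := out_persist hbO heO ρ hy hb2 u hu
      have hfle : fctI ρ s2 u ≤ y := fctI_le ρ hy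
      have hml : bO * fctI ρ s2 u ≤ bO * y := Nat.mul_le_mul_left _ hfle
      omega
  -- consumption bound and shifted validity for all u ≥ s2
  have hcons : ∀ u, s2 ≤ u → consumed (ρ.act u P.out) + δ ≤ (ρ.cfg u).sp P.out ∧
      ActValid P P.out ((ρ.cfg u).sp P.out - δ) (ρ.act u P.out) := by
    intro u hu
    have hv := ρ.valid u P.out
    have hcl := consumed_le_of_valid hv
    rcases hfloor u hu with h0 | hlarge
    · refine ⟨by omega, ?_⟩
      rw [h0, Nat.sub_zero]; exact hv
    · have hcb : consumed (ρ.act u P.out) ≤ bO := by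
        rcases ha : ρ.act u P.out with _ | rr
        · exact Nat.zero_le _
        · rcases rr with r | e
          · rw [ha] at hv
            exact hbO r hv.1
          · rw [ha] at hv
            have h1 := heO e hv.1
            have h2 := hv.2
            omega
      refine ⟨by omega, ?_⟩
      have hδle : δ ≤ (ρ.cfg u).sp P.out := by omega
      have hm : ((ρ.cfg u).sp P.out - δ) % Pi = (ρ.cfg u).sp P.out % Pi :=
        (Nat.modEq_iff_dvd' (Nat.sub_le _ _)).2 (by rwa [Nat.sub_sub_self hδle])
      exact actValid_out_transfer hbO heO hper hv (by omega) (by omega) hm.symm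
  -- boundary equality
  have hkey : shConf P δ (ρ.cfg s2) = ρ.cfg s1 := by
    refine Config.ext' (funext fun i => ?_) ?_
    · by_cases hi : i = P.out
      · subst hi
        rw [shConf_sp_out]
        omega
      · rw [shConf_sp_ne _ _ hi, hpair i hi]
    · rw [shConf_w, ρ.w_eq, ρ.w_eq]
      rw [List.drop_eq_nil_of_le (by omega), List.drop_eq_nil_of_le (by omega)]
  -- the spliced run
  refine ⟨⟨fun t => if t < s1 then ρ.cfg t else shConf P δ (ρ.cfg (t + Δ)),
           fun t => if t < s1 then ρ.act t else ρ.act (t + Δ), ?_, ?_⟩, fun t => ?_⟩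
  · simp only [if_pos (show 0 < s1 by omega)]
    exact ρ.init_eq
  · intro t
    by_cases ht : t + 1 < s1
    · have ht' : t < s1 := by omega
      simp only [if_pos ht, if_pos ht']
      exact ρ.step t
    · by_cases ht2 : t < s1
      · -- boundary step
        have he1 : t + 1 = s1 := by omega
        simp only [if_pos ht2, if_neg ht, he1, show s1 + Δ = s2 by omega, hkey]
        rw [if_neg (lt_irrefl s1)]
        have := ρ.step t
        rwa [he1] at this
      · -- main zone
        have hu : s2 ≤ t + Δ := by omega
        simp only [if_neg ht2, if_neg ht]
        rw [show t + 1 + Δ = (t + Δ) + 1 by omega]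
        obtain ⟨hC, hV⟩ := hcons (t + Δ) hu
        have hso := ρ.step (t + Δ)
        refine ⟨?_, ?_, ?_⟩
        · intro i
          by_cases hi : i = P.out
          · subst hi
            rw [shConf_sp_out]
            exact hV
          · rw [shConf_sp_ne _ _ hi]
            exact hso.1 i
        · intro i
          have heq := hso.2.1 i
          by_cases hi : i = P.out
          · subst hi
            rw [shConf_sp_out, shConf_sp_out, shConf_w]
            have hcl := consumed_le_of_valid (ρ.valid (t + Δ) P.out)
            omega
          · rw [shConf_sp_ne _ _ hi, shConf_sp_ne _ _ hi, shConf_w]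
            exact heq
        · rw [shConf_w, shConf_w]
          exact hso.2.2
  · rfl

end Splice

/-! ### Module C3 : shortening outputs to a bounded time -/

section Shorten

variable {P : SNP 3} {y pO bO eO N0 Pi : ℕ}

/-- abstract key of a configuration : pair counts exactly, output count capped -/
noncomputable def okeyf (P : SNP 3) (NN Pi : ℕ) {w : List Bool} (ρ : Run P w)
    (t : ℕ) (i : Fin 3) : ℕ :=
  if i = P.out then
    (if (ρ.cfg t).sp i ≤ NN then (ρ.cfg t).sp i else NN + 1 + (ρ.cfg t).sp i % Pi)
  else (ρ.cfg t).sp i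

lemma exists_key_pair (hWF : P.WF) {w : List Bool} (ρ : Run P w)
    (hpO : ∀ r ∈ P.fire P.out, r.p ≤ pO)
    (hy : ∀ S : Finset ℕ, (∀ τ ∈ S, FiresAt ρ τ) → S.card ≤ y)
    (hPi : 0 < Pi) (NN : ℕ)
    {L R : ℕ}
    (hLR : (max ((∑ j, P.init j) + w.length + 2 * (pO * y)) (NN + Pi) + 1) ^ 3 < R - L) :
    ∃ s1 s2, L ≤ s1 ∧ s1 < s2 ∧ s2 < R ∧
      ∀ i : Fin 3, okeyf P NN Pi ρ s1 i = okeyf P NN Pi ρ s2 i := by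
  classical
  set Rr := max ((∑ j, P.init j) + w.length + 2 * (pO * y)) (NN + Pi) with hRr
  set tgt : Finset (ℕ × ℕ × ℕ) :=
    (Finset.range (Rr + 1)) ×ˢ ((Finset.range (Rr + 1)) ×ˢ (Finset.range (Rr + 1))) with htgt
  have hb : ∀ t, ∀ i : Fin 3, okeyf P NN Pi ρ t i ≤ Rr := by
    intro t i
    unfold okeyf
    by_cases hi : i = P.out
    · rw [if_pos hi]
      rcases le_or_gt ((ρ.cfg t).sp i) NN with h | h
      · rw [if_pos h]
        exact le_trans h (le_trans (Nat.le_add_right _ _) (le_max_right _ _))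
      · rw [if_neg (by omega)]
        have h1 : (ρ.cfg t).sp i % Pi < Pi := Nat.mod_lt _ hPi
        have h2 : NN + 1 + (ρ.cfg t).sp i % Pi ≤ NN + Pi := by omega
        exact le_trans h2 (le_max_right _ _)
    · rw [if_neg hi]
      exact le_trans (sp_le_bound hWF hpO ρ hy t hi) (le_max_left _ _)
  have hmem : ∀ t, (okeyf P NN Pi ρ t 0, okeyf P NN Pi ρ t 1, okeyf P NN Pi ρ t 2) ∈ tgt := by
    intro t
    simp only [htgt, Finset.mem_product, Finset.mem_range]
    exact ⟨by have := hb t 0; omega, by have := hb t 1; omega, by have := hb t 2; omega⟩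
  have hcard : tgt.card < (Finset.Ico L R).card := by
    simp only [htgt, Finset.card_product, Finset.card_range, Nat.card_Ico]
    calc (Rr + 1) * ((Rr + 1) * (Rr + 1)) = (Rr + 1) ^ 3 := by ring
      _ < R - L := hLR
  obtain ⟨a, ha, b, hbm, hne, heq⟩ :=
    Finset.exists_ne_map_eq_of_card_lt_of_maps_to hcard (fun t _ => hmem t)
  rw [Finset.mem_Ico] at ha hbm
  have hfin3 : ∀ i : Fin 3, i = 0 ∨ i = 1 ∨ i = 2 := by decide
  have hcomp : ∀ i : Fin 3, okeyf P NN Pi ρ a i = okeyf P NN Pi ρ b i := by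
    have h0 := congrArg Prod.fst heq
    have h1 := congrArg (fun q : ℕ × ℕ × ℕ => q.2.1) heq
    have h2 := congrArg (fun q : ℕ × ℕ × ℕ => q.2.2) heq
    simp only at h0 h1 h2
    intro i
    rcases hfin3 i with h | h | h <;> subst h
    exacts [h0, h1, h2]
  rcases lt_or_gt_of_ne hne with hab | hab
  · exact ⟨a, b, ha.1, hab, hbm.2, hcomp⟩
  · exact ⟨b, a, hbm.1, hab, ha.2, fun i => (hcomp i).symm⟩

lemma shorten
    (hWF : P.WF)
    (hpO : ∀ r ∈ P.fire P.out, r.p ≤ pO)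
    (hbO : ∀ r ∈ P.fire P.out, r.b ≤ bO)
    (heO : ∀ e ∈ P.forget P.out, e ≤ eO)
    (hper : ∀ r ∈ P.fire P.out, ∀ c1 c2, N0 ≤ c1 → N0 ≤ c2 → c1 % Pi = c2 % Pi →
      (spk c1 ∈ r.E.matches' ↔ spk c2 ∈ r.E.matches'))
    (hPi : 0 < Pi)
    (hyAll : ∀ (w' : List Bool) (ρ : Run P w') (S : Finset ℕ),
      (∀ τ ∈ S, FiresAt ρ τ) → S.card ≤ y)
    (w : List Bool) :
    ∀ t2 (ρ : Run P w) t1, t1 < t2 → FiresAt ρ t1 → FiresAt ρ t2 →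
      (∀ s, s < t2 → s ≠ t1 → ¬ FiresAt ρ s) →
      ∃ (ρ' : Run P w) (u1 u2 : ℕ), u1 < u2 ∧ FiresAt ρ' u1 ∧ FiresAt ρ' u2 ∧
        (∀ s, s < u2 → s ≠ u1 → ¬ FiresAt ρ' s) ∧
        u2 ≤ 2 * w.length + 2 * ((max ((∑ j, P.init j) + w.length + 2 * (pO * y))
          ((N0 + bO + eO + bO * y) + Pi) + 1) ^ 3) + 8 := by
  intro t2
  induction t2 using Nat.strong_induction_on with
  | _ t2 IH =>
    intro ρ t1 h12 hf1 hf2 hmin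
    classical
    set NN := N0 + bO + eO + bO * y with hNN
    set Mm := (max ((∑ j, P.init j) + w.length + 2 * (pO * y)) (NN + Pi) + 1) ^ 3 with hMm
    set L0 := w.length + 1 with hL0
    by_cases hT : t2 ≤ 2 * w.length + 2 * Mm + 8
    · exact ⟨ρ, t1, t2, h12, hf1, hf2, hmin, hT⟩
    -- helper: perform a splice from a key-equal pair in a firing-free zone
    · have dosplice : ∀ s1 s2 : ℕ, L0 ≤ s1 → s1 < s2 →
          (∀ τ, s1 ≤ τ → τ < s2 → ¬ FiresAt ρ τ) →
          (∀ i : Fin 3, okeyf P NN Pi ρ s1 i = okeyf P NN Pi ρ s2 i) →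
          ∃ ρ' : Run P w, ∀ t, ρ'.act t =
            if t < s1 then ρ.act t else ρ.act (t + (s2 - s1)) := by
        intro s1 s2 hL hlt hnf hkeys
        have hpair : ∀ i, i ≠ P.out → (ρ.cfg s1).sp i = (ρ.cfg s2).sp i := by
          intro i hi
          have h := hkeys i
          unfold okeyf at h
          rwa [if_neg hi, if_neg hi] at h
        have hoeq := hkeys P.out
        unfold okeyf at hoeq
        rw [if_pos rfl, if_pos rfl] at hoeq
        have hdich : (ρ.cfg s1).sp P.out = (ρ.cfg s2).sp P.out ∨
            (NN < (ρ.cfg s1).sp P.out ∧ NN < (ρ.cfg s2).sp P.out ∧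
              (ρ.cfg s1).sp P.out % Pi = (ρ.cfg s2).sp P.out % Pi) := by
          rcases le_or_gt ((ρ.cfg s1).sp P.out) NN with h1 | h1 <;>
            rcases le_or_gt ((ρ.cfg s2).sp P.out) NN with h2 | h2
          · rw [if_pos h1, if_pos h2] at hoeq; exact Or.inl hoeq
          · rw [if_pos h1, if_neg (by omega)] at hoeq; omega
          · rw [if_neg (by omega), if_pos h2] at hoeq; omega
          · rw [if_neg (by omega), if_neg (by omega)] at hoeq
            exact Or.inr ⟨h1, h2, by omega⟩
        have hole : (ρ.cfg s1).sp P.out ≤ (ρ.cfg s2).sp P.out := by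
          rcases hdich with h | h
          · omega
          · exact out_mono_of_no_fire heO ρ (by omega) s2 (le_of_lt hlt) hnf
        have hmod : (ρ.cfg s1).sp P.out % Pi = (ρ.cfg s2).sp P.out % Pi := by
          rcases hdich with h | h
          · rw [h]
          · exact h.2.2
        have hbig : (ρ.cfg s1).sp P.out = (ρ.cfg s2).sp P.out ∨
            N0 + bO + eO + bO * y < (ρ.cfg s1).sp P.out := by
          rcases hdich with h | h
          · exact Or.inl h
          · exact Or.inr (by omega)
        exact splice hbO heO hper ρ (hyAll w ρ) (by omega) (by omega) hlt hpair hole hmod hbig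
      have hfires : ∀ (ρ' : Run P w) (s1 Δ' : ℕ),
          (∀ t, ρ'.act t = if t < s1 then ρ.act t else ρ.act (t + Δ')) →
          ∀ t, FiresAt ρ' t ↔ (if t < s1 then FiresAt ρ t else FiresAt ρ (t + Δ')) := by
        intro ρ' s1 Δ' hact t
        unfold FiresAt
        rw [hact t]
        by_cases h : t < s1
        · rw [if_pos h, if_pos h]
        · rw [if_neg h, if_neg h]
      by_cases hcase : Mm < t2 - max L0 (t1 + 1)
      · -- suffix splice in (t1, t2)
        obtain ⟨s1, s2, hs1L, hs12, hs2R, hkeys⟩ :=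
          exists_key_pair hWF ρ hpO (hyAll w ρ) hPi NN (L := max L0 (t1 + 1)) (R := t2)
            (by omega)
        have hnf : ∀ τ, s1 ≤ τ → τ < s2 → ¬ FiresAt ρ τ := by
          intro τ hτ1 hτ2
          exact hmin τ (by omega) (by omega)
        obtain ⟨ρ', hact⟩ := dosplice s1 s2 (by omega) hs12 hnf hkeys
        set Δ' := s2 - s1 with hΔ'
        have hfc := hfires ρ' s1 Δ' hact
        have hu2 : t2 - Δ' ≥ s1 + 1 := by omega
        refine IH (t2 - Δ') (by omega) ρ' t1 (by omega) ?_ ?_ ?_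
        · rw [hfc t1, if_pos (by omega)]; exact hf1
        · rw [hfc (t2 - Δ'), if_neg (by omega), show t2 - Δ' + Δ' = t2 by omega]
          exact hf2
        · intro s hs hst1
          rw [hfc s]
          by_cases h : s < s1
          · rw [if_pos h]
            exact hmin s (by omega) hst1
          · rw [if_neg h]
            exact hmin (s + Δ') (by omega) (by omega)
      · by_cases hcase2 : L0 ≤ t1 ∧ Mm < t1 - L0
        · -- prefix splice in [L0, t1)
          obtain ⟨s1, s2, hs1L, hs12, hs2R, hkeys⟩ :=
            exists_key_pair hWF ρ hpO (hyAll w ρ) hPi NN (L := L0) (R := t1)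
              (by omega)
          have hnf : ∀ τ, s1 ≤ τ → τ < s2 → ¬ FiresAt ρ τ := by
            intro τ hτ1 hτ2
            exact hmin τ (by omega) (by omega)
          obtain ⟨ρ', hact⟩ := dosplice s1 s2 hs1L hs12 hnf hkeys
          set Δ' := s2 - s1 with hΔ'
          have hfc := hfires ρ' s1 Δ' hact
          have hΔt1 : Δ' ≤ t1 := by omega
          refine IH (t2 - Δ') (by omega) ρ' (t1 - Δ') (by omega) ?_ ?_ ?_
          · rw [hfc (t1 - Δ'), if_neg (by omega), show t1 - Δ' + Δ' = t1 by omega]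
            exact hf1
          · rw [hfc (t2 - Δ'), if_neg (by omega), show t2 - Δ' + Δ' = t2 by omega]
            exact hf2
          · intro s hs hst1
            rw [hfc s]
            by_cases h : s < s1
            · rw [if_pos h]
              exact hmin s (by omega) (by omega)
            · rw [if_neg h]
              exact hmin (s + Δ') (by omega) (by omega)
        · -- both zones short : t2 is already bounded, contradiction
          exfalso
          push_neg at hcase hcase2
          by_cases hL : L0 ≤ t1
          · have := hcase2 hL
            omega
          · omega

end Shorten

/-! ### Module D : constants, computable max, and the main proof -/

lemma exists_consts (P : SNP 3) (hWF : P.WF) :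
    ∃ pO bO eO N0 Pi : ℕ, 0 < Pi ∧
      (∀ r ∈ P.fire P.out, r.p ≤ pO) ∧
      (∀ r ∈ P.fire P.out, r.b ≤ bO) ∧
      (∀ e ∈ P.forget P.out, e ≤ eO) ∧
      (∀ r ∈ P.fire P.out, ∀ c1 c2, N0 ≤ c1 → N0 ≤ c2 → c1 % Pi = c2 % Pi →
        (spk c1 ∈ r.E.matches' ↔ spk c2 ∈ r.E.matches')) := by
  classical
  obtain ⟨hsyn, hfin, hforg, hpb, hfe⟩ := hWF
  set F : Finset FireRule := (hfin P.out).toFinset with hF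
  have hmemF : ∀ r, r ∈ P.fire P.out → r ∈ F := by
    intro r hr; rw [hF, Set.Finite.mem_toFinset]; exact hr
  refine ⟨F.sup (fun r => r.p), F.sup (fun r => r.b),
    ((hforg P.out).toFinset).sup id,
    F.sup (fun r => (regex_EP r.E).choose),
    F.prod (fun r => (regex_EP r.E).choose_spec.choose), ?_, ?_, ?_, ?_, ?_⟩
  · refine Finset.prod_pos (fun r _ => ?_)
    exact (regex_EP r.E).choose_spec.choose_spec.1
  · intro r hr; exact Finset.le_sup (f := fun r => r.p) (hmemF r hr)
  · intro r hr; exact Finset.le_sup (f := fun r => r.b) (hmemF r hr)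
  · intro e he
    have : e ∈ (hforg P.out).toFinset := by rw [Set.Finite.mem_toFinset]; exact he
    exact Finset.le_sup (f := id) this
  · intro r hr c1 c2 h1 h2 hm
    have hrF : r ∈ F := hmemF r hr
    have spec := (regex_EP r.E).choose_spec.choose_spec
    have hNr : (regex_EP r.E).choose ≤ F.sup (fun r => (regex_EP r.E).choose) :=
      Finset.le_sup (f := fun r : FireRule => (regex_EP r.E).choose) hrF
    have hdvd : (regex_EP r.E).choose_spec.choose ∣
        F.prod (fun r => (regex_EP r.E).choose_spec.choose) :=
      Finset.dvd_prod_of_mem _ hrF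
    have hPi : 0 < F.prod (fun r => (regex_EP r.E).choose_spec.choose) :=
      Finset.prod_pos (fun r _ => (regex_EP r.E).choose_spec.choose_spec.1)
    have hmono := spec.mono hNr hdvd hPi
    exact hmono.congr h1 h2 hm

/-- running maximum of `f` on `[0, k]` -/
def maxFn (f : ℕ → ℕ) : ℕ → ℕ := fun k =>
  Nat.rec (motive := fun _ => ℕ) (f 0) (fun y IH => max IH (f (y + 1))) k

lemma le_maxFn (f : ℕ → ℕ) : ∀ {j k : ℕ}, j ≤ k → f j ≤ maxFn f k := by
  intro j k
  induction k with
  | zero =>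
    intro h
    have : j = 0 := by omega
    subst this; exact le_refl _
  | succ k ih =>
    intro h
    rcases Nat.lt_or_ge j (k + 1) with h' | h'
    · exact le_trans (ih (by omega)) (le_max_left _ _)
    · have : j = k + 1 := by omega
      subst this
      exact le_max_right _ _

lemma maxFn_computable {f : ℕ → ℕ} (hf : Computable f) : Computable (maxFn f) := by
  have hh : Computable₂ (fun (_ : ℕ) (p : ℕ × ℕ) => max p.2 (f (p.1 + 1))) := by
    have h1 : Computable (fun p : ℕ × (ℕ × ℕ) => p.2.2) :=
      Computable.snd.comp Computable.snd
    have h2 : Computable (fun p : ℕ × (ℕ × ℕ) => f (p.2.1 + 1)) :=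
      hf.comp (Computable.succ.comp (Computable.fst.comp Computable.snd))
    have h3 := (Primrec₂.to_comp Primrec.nat_max).comp h1 h2
    exact h3.to₂
  have h := Computable.nat_rec (f := fun n : ℕ => n) (g := fun _ : ℕ => f 0)
    Computable.id (Computable.const (f 0)) hh
  exact h.of_eq (fun n => rfl)

/-- There is no universal extended SN P system without delay
having only 3 neurons, generalised input and standard output (output neuron
firing at most a constant number of times, independent of the input). -/
theorem no_universal_three_neuron_SNP_with_standard_output :
    ¬ ∃ P : SNP 3, P.WF ∧
      (∃ y : ℕ, ∀ (w : List Bool) (ρ : Run P w) (S : Finset ℕ),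
        (∀ t ∈ S, FiresAt ρ t) → S.card ≤ y) ∧
      Universal P := by
  rintro ⟨P, hWF, ⟨y, hy⟩, f, g, hfC, hgC, hU⟩
  classical
  obtain ⟨pO, bO, eO, N0, Pi, hPi, hpO, hbO, heO, hper⟩ := exists_consts P hWF
  set A := (∑ j, P.init j) + 2 * (pO * y) + ((N0 + bO + eO + bO * y) + Pi) with hA
  set Tf : ℕ → ℕ :=
    fun n => 2 * n + 2 * ((A + n + 1) * ((A + n + 1) * (A + n + 1))) + 8 with hTf
  -- every produced output can be produced within computably bounded time
  have hshort : ∀ (w : List Bool) (z : ℕ), Outputs P w z →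
      ∃ z', z' ≤ Tf w.length ∧ Outputs P w z' := by
    intro w z hOut
    obtain ⟨ρ, t1, t2, h12, hf1, hf2, hmin, hz⟩ := hOut
    obtain ⟨ρ', u1, u2, h12', hf1', hf2', hmin', hu2⟩ :=
      shorten hWF hpO hbO heO hper hPi hy w t2 ρ t1 h12 hf1 hf2 hmin
    refine ⟨u2 - u1, ?_, ρ', u1, u2, h12', hf1', hf2', hmin', rfl⟩
    have hmax : max ((∑ j, P.init j) + w.length + 2 * (pO * y))
        ((N0 + bO + eO + bO * y) + Pi) + 1 ≤ A + w.length + 1 := by omega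
    have hpow := Nat.pow_le_pow_left hmax 3
    have hcube : (A + w.length + 1) ^ 3
        = (A + w.length + 1) * ((A + w.length + 1) * (A + w.length + 1)) := by ring
    simp only [hTf]
    omega
  -- computability of the bound
  have hx1 : Primrec fun n : ℕ => A + n + 1 :=
    Primrec₂.comp Primrec.nat_add
      (Primrec₂.comp Primrec.nat_add (Primrec.const A) Primrec.id) (Primrec.const 1)
  have hcubeP : Primrec fun n : ℕ => (A + n + 1) * ((A + n + 1) * (A + n + 1)) :=
    Primrec₂.comp Primrec.nat_mul hx1 (Primrec₂.comp Primrec.nat_mul hx1 hx1)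
  have hTfP : Primrec Tf := by
    rw [hTf]
    exact Primrec₂.comp Primrec.nat_add
      (Primrec₂.comp Primrec.nat_add
        (Primrec₂.comp Primrec.nat_mul (Primrec.const 2) Primrec.id)
        (Primrec₂.comp Primrec.nat_mul (Primrec.const 2) hcubeP))
      (Primrec.const 8)
  -- the diagonal function
  set F2 : Nat.Partrec.Code → ℕ → ℕ := fun c n =>
    maxFn f (Tf (g (Encodable.encode c, Denumerable.ofNat (List ℕ) n)).length) + 1 with hF2
  have h1 : Computable fun p : Nat.Partrec.Code × ℕ =>
      ((Encodable.encode p.1 : ℕ), Denumerable.ofNat (List ℕ) p.2) :=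
    Computable.pair (Computable.encode.comp Computable.fst)
      ((Computable.ofNat (List ℕ)).comp Computable.snd)
  have h2 : Computable fun p : Nat.Partrec.Code × ℕ =>
      g (Encodable.encode p.1, Denumerable.ofNat (List ℕ) p.2) := hgC.comp h1
  have h3 : Computable fun p : Nat.Partrec.Code × ℕ =>
      (g (Encodable.encode p.1, Denumerable.ofNat (List ℕ) p.2)).length :=
    (Primrec.list_length.to_comp).comp h2
  have h4 : Computable fun p : Nat.Partrec.Code × ℕ =>
      Tf (g (Encodable.encode p.1, Denumerable.ofNat (List ℕ) p.2)).length :=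
    (hTfP.to_comp).comp h3
  have h5 : Computable fun p : Nat.Partrec.Code × ℕ => F2 p.1 p.2 :=
    Computable.succ.comp ((maxFn_computable hfC).comp h4)
  have hPart : Partrec₂ fun (c : Nat.Partrec.Code) (n : ℕ) =>
      (Part.some (F2 c n) : Part ℕ) := h5
  obtain ⟨c0, hc0⟩ := Nat.Partrec.Code.fixed_point₂ hPart
  have hphi : ∀ v : List ℕ, phi (Encodable.encode c0) v
      = Part.some (F2 c0 (Encodable.encode v)) := by
    intro v
    unfold phi
    rw [Denumerable.ofNat_encode, hc0]
  have hdom : (phi (Encodable.encode c0) ([] : List ℕ)).Dom := by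
    rw [hphi]; trivial
  obtain ⟨z, hz⟩ := (hU (Encodable.encode c0) []).2 hdom
  obtain ⟨z', hz'le, hz'out⟩ := hshort _ z hz
  have hEq := (hU (Encodable.encode c0) []).1 z' hz'out
  rw [hphi] at hEq
  have hfz : F2 c0 (Encodable.encode ([] : List ℕ)) = f z' := Part.some_inj.1 hEq
  have hF2eq : F2 c0 (Encodable.encode ([] : List ℕ))
      = maxFn f (Tf (g (Encodable.encode c0, ([] : List ℕ))).length) + 1 := by
    rw [hF2]
    simp only []
    rw [Denumerable.ofNat_encode]
  have hle2 : f z' ≤ maxFn f (Tf (g (Encodable.encode c0, ([] : List ℕ))).length) :=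
    le_maxFn f hz'le
  omega

end PaperSNP
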